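/- Let g ∈ ℝ^d, H a symmetric d×d matrix, M > 0, and let h* be a global minimizer of m(h) = gᵀh + (1/2)hᵀHh + (M/6)‖h‖³. Then the matrix H + (M/2)‖h*‖·I is positive semidefinite. -/

import Mathlib

open scoped RealInnerProductSpace

private lemma aux_div (B t : ℝ) (ht : t ≠ 0) (h : 0 ≤ t ^ 2 * B) : 0 ≤ B := by
  by_contra hB
  push_neg at hB
  have ht2 : 0 < t ^ 2 := by positivity
  nlinarith

private lemma aux_pos (a b : ℝ) (h : ∀ t : ℝ, 0 < t → 0 ≤ a + b * t) : 0 ≤ a := by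
  by_contra hneg
  push_neg at hneg
  rcases le_or_gt b 0 with hb | hb
  · have := h 1 one_pos; nlinarith
  · have ht : 0 < -a / (2 * b) := div_pos (by linarith) (by linarith)
    have h2 := h (-a / (2 * b)) ht
    have h3 : b * (-a / (2 * b)) = -a / 2 := by field_simp
    rw [h3] at h2; linarith

private lemma aux_eps (a c : ℝ) (h : ∀ ε : ℝ, ε ≠ 0 → 0 ≤ a + c * ε ^ 2) : 0 ≤ a := by
  by_contra hneg
  push_neg at hneg
  rcases le_or_gt c 0 with hc | hc
  · have := h 1 one_ne_zero; nlinarith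
  · have hx : 0 < -a / (2 * c) := div_pos (by linarith) (by linarith)
    have hε := h (Real.sqrt (-a / (2 * c))) (by positivity)
    rw [Real.sq_sqrt hx.le] at hε
    have h3 : c * (-a / (2 * c)) = -a / 2 := by field_simp
    rw [h3] at hε; linarith

set_option maxHeartbeats 1000000 in
theorem cubic_second_order_optimality (d : ℕ) (hd : 0 < d)
    (g : EuclideanSpace ℝ (Fin d))
    (H : EuclideanSpace ℝ (Fin d) →L[ℝ] EuclideanSpace ℝ (Fin d))
    (hH : IsSelfAdjoint H) (M : ℝ) (hM : 0 < M)
    (hstar : EuclideanSpace ℝ (Fin d))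
    (hmin : ∀ h : EuclideanSpace ℝ (Fin d),
      ⟪g, hstar⟫ + (1 / 2) * ⟪hstar, H hstar⟫ + (M / 6) * ‖hstar‖ ^ 3
        ≤ ⟪g, h⟫ + (1 / 2) * ⟪h, H h⟫ + (M / 6) * ‖h‖ ^ 3) :
    ∀ x : EuclideanSpace ℝ (Fin d),
      0 ≤ ⟪x, H x⟫ + (M / 2) * ‖hstar‖ * ‖x‖ ^ 2 := by
  have hsym : ∀ a b : EuclideanSpace ℝ (Fin d), ⟪H a, b⟫ = ⟪a, H b⟫ :=
    ContinuousLinearMap.isSelfAdjoint_iff_isSymmetric.mp hH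
  -- expansion of the inner products
  have e1 : ∀ (t : ℝ) (v : EuclideanSpace ℝ (Fin d)),
      ⟪g, hstar + t • v⟫ = ⟪g, hstar⟫ + t * ⟪g, v⟫ := by
    intro t v
    rw [inner_add_right, real_inner_smul_right]
  have e2 : ∀ (t : ℝ) (v : EuclideanSpace ℝ (Fin d)),
      ⟪hstar + t • v, H (hstar + t • v)⟫
        = ⟪hstar, H hstar⟫ + 2 * t * ⟪hstar, H v⟫ + t ^ 2 * ⟪v, H v⟫ := by
    intro t v
    have hc : ⟪v, H hstar⟫ = ⟪hstar, H v⟫ := by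
      rw [← hsym v hstar, real_inner_comm]
    simp only [map_add, map_smul, inner_add_left, inner_add_right,
      real_inner_smul_left, real_inner_smul_right, hc]
    ring
  have nrm : ∀ (t : ℝ) (v : EuclideanSpace ℝ (Fin d)),
      ‖hstar + t • v‖ ^ 2 = ‖hstar‖ ^ 2 + 2 * ⟪hstar, v⟫ * t + ‖v‖ ^ 2 * t ^ 2 := by
    intro t v
    rw [norm_add_sq_real, real_inner_smul_right, norm_smul]
    simp [mul_pow, sq_abs]
    ring
  have key : ∀ (t : ℝ) (v : EuclideanSpace ℝ (Fin d)),
      0 ≤ t * (⟪g, v⟫ + ⟪hstar, H v⟫) + t ^ 2 * (1 / 2) * ⟪v, H v⟫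
          + (M / 6) * (‖hstar + t • v‖ ^ 3 - ‖hstar‖ ^ 3) := by
    intro t v
    have h1 := hmin (hstar + t • v)
    rw [e1 t v, e2 t v] at h1
    linarith
  intro x
  rcases eq_or_ne hstar 0 with h0 | h0
  · -- minimizer is zero
    have hQ : 0 ≤ ⟪x, H x⟫ := by
      apply aux_pos _ ((M / 3) * ‖x‖ ^ 3)
      intro t ht
      have k1 := key t x
      have k2 := key (-t) x
      rw [h0] at k1 k2
      simp only [inner_zero_left, zero_add, norm_zero, norm_smul, Real.norm_eq_abs,
        abs_of_pos ht, abs_neg] at k1 k2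
      apply aux_div _ t (ne_of_gt ht)
      nlinarith [k1, k2]
    have h0' : ‖hstar‖ = 0 := by rw [h0]; simp
    rw [h0']
    simpa using hQ
  · have hr : 0 < ‖hstar‖ := norm_pos_iff.mpr h0
    -- first-order optimality condition
    have foc : ∀ v : EuclideanSpace ℝ (Fin d),
        ⟪g, v⟫ + ⟪hstar, H v⟫ + (M / 2) * ‖hstar‖ * ⟪hstar, v⟫ = 0 := by
      intro v
      set φ : ℝ → ℝ := fun t =>
        ⟪g, hstar⟫ + t * ⟪g, v⟫
          + (1 / 2) * (⟪hstar, H hstar⟫ + 2 * t * ⟪hstar, H v⟫ + t ^ 2 * ⟪v, H v⟫)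
          + (M / 6) * (Real.sqrt (‖hstar‖ ^ 2 + 2 * ⟪hstar, v⟫ * t + ‖v‖ ^ 2 * t ^ 2)) ^ 3
        with hφ
      have hφeq : ∀ t : ℝ, φ t = ⟪g, hstar + t • v⟫ + (1 / 2) * ⟪hstar + t • v, H (hstar + t • v)⟫
          + (M / 6) * ‖hstar + t • v‖ ^ 3 := by
        intro t
        have hs : Real.sqrt (‖hstar‖ ^ 2 + 2 * ⟪hstar, v⟫ * t + ‖v‖ ^ 2 * t ^ 2)
            = ‖hstar + t • v‖ := by
          rw [← nrm t v, Real.sqrt_sq (norm_nonneg _)]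
        simp only [hφ]
        rw [e1 t v, e2 t v, hs]
      have hlocmin : IsLocalMin φ 0 := by
        refine Filter.Eventually.of_forall fun t => ?_
        rw [hφeq t, hφeq 0]
        simpa using hmin (hstar + t • v)
      -- derivative of φ at 0
      have hq : HasDerivAt
          (fun t : ℝ => ‖hstar‖ ^ 2 + 2 * ⟪hstar, v⟫ * t + ‖v‖ ^ 2 * t ^ 2)
          (2 * ⟪hstar, v⟫) 0 := by
        have h1 : HasDerivAt (fun t : ℝ => 2 * ⟪hstar, v⟫ * t) (2 * ⟪hstar, v⟫) 0 := by
          simpa using (hasDerivAt_id (0 : ℝ)).const_mul (2 * ⟪hstar, v⟫)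
        have h2 : HasDerivAt (fun t : ℝ => ‖v‖ ^ 2 * t ^ 2) 0 0 := by
          simpa using (hasDerivAt_pow 2 (0 : ℝ)).const_mul (‖v‖ ^ 2)
        have h3 := (h1.const_add (‖hstar‖ ^ 2)).add h2
        rw [add_zero] at h3
        exact h3
      have hq0 : ‖hstar‖ ^ 2 + 2 * ⟪hstar, v⟫ * 0 + ‖v‖ ^ 2 * 0 ^ 2 = ‖hstar‖ ^ 2 := by ring
      have hq0' : ‖hstar‖ ^ 2 + 2 * ⟪hstar, v⟫ * 0 + ‖v‖ ^ 2 * 0 ^ 2 ≠ 0 := by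
        rw [hq0]; positivity
      have hsq := hq.sqrt hq0'
      have hcube := hsq.pow 3
      have hlin : HasDerivAt (fun t : ℝ => ⟪g, hstar⟫ + t * ⟪g, v⟫) ⟪g, v⟫ 0 := by
        simpa using ((hasDerivAt_id (0 : ℝ)).mul_const ⟪g, v⟫).const_add ⟪g, hstar⟫
      have hquad : HasDerivAt
          (fun t : ℝ => (1 / 2) * (⟪hstar, H hstar⟫ + 2 * t * ⟪hstar, H v⟫ + t ^ 2 * ⟪v, H v⟫))
          ⟪hstar, H v⟫ 0 := by
        have h1 : HasDerivAt (fun t : ℝ => 2 * t * ⟪hstar, H v⟫) (2 * ⟪hstar, H v⟫) 0 := by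
          simpa using (((hasDerivAt_id (0 : ℝ)).const_mul 2).mul_const ⟪hstar, H v⟫)
        have h2 : HasDerivAt (fun t : ℝ => t ^ 2 * ⟪v, H v⟫) 0 0 := by
          simpa using (hasDerivAt_pow 2 (0 : ℝ)).mul_const ⟪v, H v⟫
        have h3 := ((h1.const_add ⟪hstar, H hstar⟫).add h2).const_mul (1 / 2 : ℝ)
        simpa using h3
      have hφder := (hlin.add hquad).add (hcube.const_mul (M / 6))
      have hd0 := hlocmin.deriv_eq_zero
      rw [(show HasDerivAt φ _ 0 from hφder).deriv] at hd0
      rw [hq0, Real.sqrt_sq (norm_nonneg _)] at hd0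
      have hrne : ‖hstar‖ ≠ 0 := hr.ne'
      norm_num at hd0
      simp only [PiLp.inner_apply, RCLike.inner_apply, conj_trivial] at hd0 ⊢
      have hfs : M / 6 * (3 * ‖hstar‖ ^ 2 * ((2 * ∑ x : Fin d, v x * hstar x) / (2 * ‖hstar‖)))
          = M / 2 * ‖hstar‖ * ∑ x : Fin d, v x * hstar x := by
        field_simp
        ring
      linarith [hd0, hfs]
    -- main inequality for directions not orthogonal to hstar
    have main1 : ∀ y : EuclideanSpace ℝ (Fin d), ⟪hstar, y⟫ ≠ 0 →
        0 ≤ ⟪y, H y⟫ + (M / 2) * ‖hstar‖ * ‖y‖ ^ 2 := by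
      intro y hcy
      have hy0 : y ≠ 0 := by rintro rfl; simp at hcy
      have hs : 0 < ‖y‖ ^ 2 := pow_pos (norm_pos_iff.mpr hy0) 2
      set t₀ : ℝ := -2 * ⟪hstar, y⟫ / ‖y‖ ^ 2 with ht₀
      have ht0ne : t₀ ≠ 0 := by
        rw [ht₀]
        exact div_ne_zero (by simpa using hcy) hs.ne'
      have hts : t₀ * ‖y‖ ^ 2 = -2 * ⟪hstar, y⟫ := by
        rw [ht₀]; field_simp
      have hc' : ⟪hstar, y⟫ = -(t₀ * ‖y‖ ^ 2) / 2 := by linarith [hts]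
      have hnorm : ‖hstar + t₀ • y‖ = ‖hstar‖ := by
        have h2 : ‖hstar + t₀ • y‖ ^ 2 = ‖hstar‖ ^ 2 := by
          rw [nrm]
          linear_combination t₀ * hts
        calc ‖hstar + t₀ • y‖ = Real.sqrt (‖hstar + t₀ • y‖ ^ 2) :=
              (Real.sqrt_sq (norm_nonneg _)).symm
          _ = Real.sqrt (‖hstar‖ ^ 2) := by rw [h2]
          _ = ‖hstar‖ := Real.sqrt_sq (norm_nonneg _)
      have hAB : ⟪g, y⟫ + ⟪hstar, H y⟫ = -((M / 2) * ‖hstar‖ * ⟪hstar, y⟫) := by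
        linarith [foc y]
      have hk := key t₀ y
      rw [hnorm, hAB, hc'] at hk
      apply aux_div _ t₀ ht0ne
      nlinarith [hk]
    rcases eq_or_ne ⟪hstar, x⟫ 0 with hcx | hcx
    · -- orthogonal case: approximate by non-orthogonal directions
      apply aux_eps _ (⟪hstar, H hstar⟫ + (M / 2) * ‖hstar‖ * ‖hstar‖ ^ 2)
      intro ε hε
      have e2' : ∀ t : ℝ, ⟪x + t • hstar, H (x + t • hstar)⟫
          = ⟪x, H x⟫ + 2 * t * ⟪x, H hstar⟫ + t ^ 2 * ⟪hstar, H hstar⟫ := by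
        intro t
        have hcc : ⟪hstar, H x⟫ = ⟪x, H hstar⟫ := by
          rw [← hsym hstar x, real_inner_comm]
        simp only [map_add, map_smul, inner_add_left, inner_add_right,
          real_inner_smul_left, real_inner_smul_right, hcc]
        ring
      have nrm' : ∀ t : ℝ, ‖x + t • hstar‖ ^ 2 = ‖x‖ ^ 2 + t ^ 2 * ‖hstar‖ ^ 2 := by
        intro t
        have hz : ⟪x, t • hstar⟫ = 0 := by
          rw [real_inner_smul_right, real_inner_comm, hcx]; ring
        rw [norm_add_sq_real, hz, norm_smul]
        simp [mul_pow, sq_abs]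
      have hinner : ∀ t : ℝ, ⟪hstar, x + t • hstar⟫ = t * ‖hstar‖ ^ 2 := by
        intro t
        rw [inner_add_right, real_inner_smul_right, hcx, real_inner_self_eq_norm_sq]
        ring
      have hne : ∀ t : ℝ, t ≠ 0 → ⟪hstar, x + t • hstar⟫ ≠ 0 := by
        intro t ht
        rw [hinner t]
        exact mul_ne_zero ht (by positivity)
      have h1 := main1 (x + ε • hstar) (hne ε hε)
      have h2 := main1 (x + (-ε) • hstar) (hne (-ε) (neg_ne_zero.mpr hε))
      rw [e2' ε, nrm' ε] at h1
      rw [e2' (-ε), nrm' (-ε)] at h2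
      nlinarith [h1, h2]
    · exact main1 x hcx
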